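/- Let L be a timed language, K ∈ ℕ, and u, v timed words with u ≈^{L,K} v. Let a ∈ Σ, t_u ∈ ℝ≥0, and let t'_v be the unique entry of the one-element timestamp τ_{u→v}(t_u). Set u1 = u(t_u·a) and v2 = v(t'_v·a). Then c^K(u1) ≡^K c^K(v2) and τ_{u1→v2}(u1^{-1}L) = v2^{-1}L; in particular u1 ≈^{L,K} v2. -/

import Mathlib

open scoped NNReal Classical

namespace IRTA

/-- A timestamp is a finite sequence of non-negative reals. -/
abbrev Timestamp : Type := List ℝ≥0

/-- A timed word is a finite sequence of (delay, letter) pairs. -/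
abbrev TimedWord (A : Type) : Type := List (ℝ≥0 × A)

/-- Fractional part of a non-negative real. -/
noncomputable def fracPart (x : ℝ≥0) : ℝ≥0 := x - (⌊x⌋₊ : ℝ≥0)

/-- `x` is a natural-number value. -/
def IsNatVal (x : ℝ≥0) : Prop := ∃ m : ℕ, x = (m : ℝ≥0)

/-- Region equivalence `≡^K`. -/
def RegEq (K : ℕ) (x y : ℝ≥0) : Prop :=
  (⌊x⌋₊ = ⌊y⌋₊ ∧ (fracPart x = 0 ↔ fracPart y = 0)) ∨ ((K : ℝ≥0) < x ∧ (K : ℝ≥0) < y)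

/-- One step of the (greedy) clock evolution: reset whenever the value is an
integer between `0` and `K`. -/
noncomputable def resetStep (K : ℕ) (v : ℝ≥0) : ℝ≥0 :=
  if ∃ m : ℕ, m ≤ K ∧ v = (m : ℝ≥0) then 0 else v

/-- Auxiliary function computing `c^K` with accumulator `v`. -/
noncomputable def cKAux (K : ℕ) : ℝ≥0 → Timestamp → ℝ≥0
  | v, [] => v
  | v, t :: d => cKAux K (resetStep K (v + t)) d

/-- `c^K(d)`: the sum of the delays after the last integral position of `d`. -/
noncomputable def cK (K : ℕ) (d : Timestamp) : ℝ≥0 := cKAux K 0 d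

/-- `c^K` of a timed word is `c^K` of its timestamp. -/
noncomputable def cKW {A : Type} (K : ℕ) (w : TimedWord A) : ℝ≥0 :=
  cK K (w.map Prod.fst)

/-- `c^K_⊤` : `c^K` truncated at `K`. -/
noncomputable def cKTop {A : Type} (K : ℕ) (w : TimedWord A) : WithTop ℝ≥0 :=
  if cKW K w ≤ (K : ℝ≥0) then ((cKW K w : ℝ≥0) : WithTop ℝ≥0) else ⊤

/-! ### Clock constraints and one-clock timed automata -/

/-- Clock constraints `φ ::= x < m | m < x | x = m | φ ∧ φ`. -/
inductive CC : Type where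
  | lt : ℕ → CC
  | gt : ℕ → CC
  | eq : ℕ → CC
  | and : CC → CC → CC

/-- Satisfaction of a clock constraint by a clock value. -/
def CC.sat : CC → ℝ≥0 → Prop
  | .lt m, x => x < (m : ℝ≥0)
  | .gt m, x => (m : ℝ≥0) < x
  | .eq m, x => x = (m : ℝ≥0)
  | .and φ ψ, x => φ.sat x ∧ ψ.sat x

/-- The largest constant appearing in a clock constraint. -/
def CC.maxConst : CC → ℕ
  | .lt m => m
  | .gt m => m
  | .eq m => m
  | .and φ ψ => max φ.maxConst ψ.maxConst

/-- A transition of a one-clock timed automaton; `reset = true` means the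
clock is reset (the `r = 0` case). -/
structure TTrans (Q A : Type) where
  src : Q
  dst : Q
  lab : A
  guard : CC
  reset : Bool

/-- A one-clock timed automaton. -/
structure TA (A : Type) where
  Q : Type
  init : Q
  final : Set Q
  trans : Set (TTrans Q A)

/-- The automaton has finitely many states and transitions. -/
def TA.IsFinite {A : Type} (M : TA A) : Prop := Finite M.Q ∧ M.trans.Finite

/-- Runs of a one-clock timed automaton between configurations. -/
inductive Steps {A : Type} (M : TA A) : M.Q × ℝ≥0 → TimedWord A → M.Q × ℝ≥0 → Prop
  | nil (c : M.Q × ℝ≥0) : Steps M c [] c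
  | cons {q : M.Q} {ν t : ℝ≥0} {a : A} {w : TimedWord A} {c : M.Q × ℝ≥0}
      (θ : TTrans M.Q A) (hθ : θ ∈ M.trans) (hsrc : θ.src = q) (hlab : θ.lab = a)
      (hg : θ.guard.sat (ν + t))
      (hrest : Steps M (θ.dst, if θ.reset then 0 else ν + t) w c) :
      Steps M (q, ν) ((t, a) :: w) c

/-- The language of `M` from a given configuration. -/
def TA.LangFrom {A : Type} (M : TA A) (c : M.Q × ℝ≥0) : Set (TimedWord A) :=
  {w | ∃ q' : M.Q, ∃ ν' : ℝ≥0, Steps M c w (q', ν') ∧ q' ∈ M.final}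

/-- The language of `M` (from the initial configuration). -/
def TA.Lang {A : Type} (M : TA A) : Set (TimedWord A) := M.LangFrom (M.init, 0)

/-- Determinism: distinct transitions with the same source and letter have
disjoint guards. -/
def TA.Deterministic {A : Type} (M : TA A) : Prop :=
  ∀ θ₁ ∈ M.trans, ∀ θ₂ ∈ M.trans, θ₁ ≠ θ₂ → θ₁.src = θ₂.src → θ₁.lab = θ₂.lab →
    ∀ x : ℝ≥0, ¬ (θ₁.guard.sat x ∧ θ₂.guard.sat x)

/-- Completeness: every timed word admits a run from the initial configuration. -/
def TA.Complete {A : Type} (M : TA A) : Prop :=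
  ∀ w : TimedWord A, ∃ c : M.Q × ℝ≥0, Steps M (M.init, 0) w c

/-- A 1-IRTA: every resetting transition has an equality guard. -/
def TA.IsIRTA {A : Type} (M : TA A) : Prop :=
  ∀ θ ∈ M.trans, θ.reset = true → ∃ m : ℕ, θ.guard = CC.eq m

/-- Guards allowed in a strict 1-IRTA with constant `K`. -/
def StrictGuard (K : ℕ) (φ : CC) : Prop :=
  (∃ m : ℕ, φ = CC.eq m) ∨ (∃ m : ℕ, φ = CC.and (CC.gt m) (CC.lt (m + 1))) ∨ φ = CC.gt K

/-- Strictness with constant `K`: every guard is of one of the allowed forms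
and a guard is an equality iff the transition resets. -/
def TA.IsStrict {A : Type} (M : TA A) (K : ℕ) : Prop :=
  ∀ θ ∈ M.trans, StrictGuard K θ.guard ∧ ((∃ m : ℕ, θ.guard = CC.eq m) ↔ θ.reset = true)

/-- All constants appearing in guards are at most `K`. -/
def TA.MaxConstLE {A : Type} (M : TA A) (K : ℕ) : Prop :=
  ∀ θ ∈ M.trans, θ.guard.maxConst ≤ K

/-- `M` reaches the same control state on reading `u` and `v` from the initial
configuration. -/
def TA.SameState {A : Type} (M : TA A) (u v : TimedWord A) : Prop :=
  ∃ q : M.Q, ∃ ν ν' : ℝ≥0, Steps M (M.init, 0) u (q, ν) ∧ Steps M (M.init, 0) v (q, ν')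

/-- A `K`-acceptor. -/
def IsKAcceptor {A : Type} (M : TA A) (K : ℕ) : Prop :=
  M.IsFinite ∧ M.Complete ∧ M.Deterministic ∧ M.IsIRTA ∧ M.IsStrict K ∧ M.MaxConstLE K ∧
    ∀ u v : TimedWord A, M.SameState u v → RegEq K (cKW K u) (cKW K v)

/-! ### Equivalences on timed words -/

/-- `L`-preservation of a relation on timed words. -/
def LPreserving {A : Type} (L : Set (TimedWord A)) (r : TimedWord A → TimedWord A → Prop) :
    Prop :=
  ∀ u v : TimedWord A, r u v → (u ∈ L ↔ v ∈ L)

/-- `K`-monotonicity of a relation on timed words. -/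
def KMonotonic {A : Type} (K : ℕ) (r : TimedWord A → TimedWord A → Prop) : Prop :=
  ∀ u v : TimedWord A, r u v →
    RegEq K (cKW K u) (cKW K v) ∧
      ∀ (a : A) (t t' : ℝ≥0), RegEq K (cKW K u + t) (cKW K v + t') →
        r (u ++ [(t, a)]) (v ++ [(t', a)])

/-- Finite index: there are finitely many classes `{v | r u v}`. -/
def FiniteIndex {A : Type} (r : TimedWord A → TimedWord A → Prop) : Prop :=
  Set.Finite (Set.range fun u : TimedWord A => {v : TimedWord A | r u v})

/-! ### The rescaling maps -/

/-- The bijection `f_{λ→λ'}` of the open unit interval. -/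
noncomputable def fScale (lam lam' t : ℝ≥0) : ℝ≥0 :=
  if t ≤ lam then (lam' / lam) * t else lam' + ((1 - lam') / (1 - lam)) * (t - lam)

/-- The new delay `t'` computed from the current clock values `y, y'` and delay `t`. -/
noncomputable def tauStep (K : ℕ) (y y' t : ℝ≥0) : ℝ≥0 :=
  if (IsNatVal y ∧ IsNatVal y') ∨ ((K : ℝ≥0) < y ∧ (K : ℝ≥0) < y') then t
  else (⌊t⌋₊ : ℝ≥0) + fScale (1 - fracPart y) (1 - fracPart y') (fracPart t)

/-- Auxiliary rescaling map on timestamps, carrying the current clock values. -/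
noncomputable def tauAux (K : ℕ) : ℝ≥0 → ℝ≥0 → Timestamp → Timestamp
  | _, _, [] => []
  | y, y', t :: d =>
      tauStep K y y' t ::
        tauAux K (resetStep K (y + t)) (resetStep K (y' + tauStep K y y' t)) d

/-- The rescaling map `τ_{x→x'}` on timestamps. -/
noncomputable def tau (K : ℕ) (x x' : ℝ≥0) (d : Timestamp) : Timestamp :=
  tauAux K (resetStep K x) (resetStep K x') d

/-- Auxiliary rescaling map on timed words. -/
noncomputable def tauWAux {A : Type} (K : ℕ) : ℝ≥0 → ℝ≥0 → TimedWord A → TimedWord A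
  | _, _, [] => []
  | y, y', (t, a) :: w =>
      (tauStep K y y' t, a) ::
        tauWAux K (resetStep K (y + t)) (resetStep K (y' + tauStep K y y' t)) w

/-- The rescaling map `τ_{x→x'}` on timed words. -/
noncomputable def tauW {A : Type} (K : ℕ) (x x' : ℝ≥0) (w : TimedWord A) : TimedWord A :=
  tauWAux K (resetStep K x) (resetStep K x') w

/-! ### Residuals and the syntactic equivalence -/

/-- The residual language `u^{-1}L`. -/
def residual {A : Type} (L : Set (TimedWord A)) (u : TimedWord A) : Set (TimedWord A) :=
  {w : TimedWord A | u ++ w ∈ L}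

/-- The syntactic equivalence `≈^{L,K}`. -/
def ApproxLK {A : Type} (L : Set (TimedWord A)) (K : ℕ) (u v : TimedWord A) : Prop :=
  RegEq K (cKW K u) (cKW K v) ∧
    (tauW K (cKW K u) (cKW K v)) '' (residual L u) = residual L v

/-! ### The automaton built from a monotonic equivalence -/

/-- The region guard `φ([t])`. -/
noncomputable def phiOf (K : ℕ) (t : ℝ≥0) : CC :=
  if t ≤ (K : ℝ≥0) then
    (if IsNatVal t then CC.eq ⌊t⌋₊ else CC.and (CC.gt ⌊t⌋₊) (CC.lt (⌊t⌋₊ + 1)))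
  else CC.gt K

/-- The automaton `A_≈` built from an equivalence `s` on timed words. -/
noncomputable def Aapprox {A : Type} (L : Set (TimedWord A)) (K : ℕ)
    (s : Setoid (TimedWord A)) : TA A where
  Q := Quotient s
  init := Quotient.mk s ([] : TimedWord A)
  final := {q : Quotient s | ∃ u : TimedWord A, q = Quotient.mk s u ∧ u ∈ L}
  trans := {θ : TTrans (Quotient s) A |
    ∃ (u : TimedWord A) (a : A) (t : ℝ≥0),
      θ.src = Quotient.mk s u ∧ θ.dst = Quotient.mk s (u ++ [(t, a)]) ∧ θ.lab = a ∧
      θ.guard = phiOf K (cKW K u + t) ∧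
      (θ.reset = true ↔ ∃ m : ℕ, m ≤ K ∧ cKW K u + t = (m : ℝ≥0))}

/-! ### Half-integral and small words -/

/-- Every delay has fractional part `0` or `1/2`. -/
def HalfIntegral {A : Type} (w : TimedWord A) : Prop :=
  ∀ p ∈ w, fracPart p.1 = 0 ∨ fracPart p.1 = 1 / 2

/-- Every delay is `< K + 1`. -/
def SmallWord {A : Type} (K : ℕ) (w : TimedWord A) : Prop :=
  ∀ p ∈ w, p.1 < (K : ℝ≥0) + 1

/-- The delays of `Σ_K`: half-integral values `≤ K + 1/2`. -/
def IsSigmaK (K : ℕ) (t : ℝ≥0) : Prop :=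
  (fracPart t = 0 ∨ fracPart t = 1 / 2) ∧ t ≤ (K : ℝ≥0) + 1 / 2

/-- Words over `Σ_K` (small half-integral words). -/
def SigmaWord {A : Type} (K : ℕ) (w : TimedWord A) : Prop :=
  ∀ p ∈ w, IsSigmaK K p.1



/-! ### `K`-acceptors with their region representatives -/

/-- A `K`-acceptor bundled with the half-integral representative of the
unique region of each state. -/
structure KAcc (A : Type) (K : ℕ) where
  M : TA A
  acc : IsKAcceptor M K
  reg : M.Q → ℝ≥0
  regHalf : ∀ q : M.Q, fracPart (reg q) = 0 ∨ fracPart (reg q) = 1 / 2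
  regLe : ∀ q : M.Q, reg q ≤ (K : ℝ≥0) + 1 / 2
  regSpec : ∀ (w : TimedWord A) (q : M.Q) (x : ℝ≥0),
    Steps M (M.init, 0) w (q, x) → RegEq K x (reg q)

/-- The minimization equivalences `∼^i` on the states of a `K`-acceptor. -/
def simEq {A : Type} {K : ℕ} (B : KAcc A K) : ℕ → B.M.Q → B.M.Q → Prop
  | 0, p, q => B.reg p = B.reg q ∧ (p ∈ B.M.final ↔ q ∈ B.M.final)
  | i + 1, p, q => simEq B i p q ∧
      ∀ (t : ℝ≥0) (a : A), IsSigmaK K t →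
        ∀ θ₁ θ₂ : TTrans B.M.Q A, θ₁ ∈ B.M.trans → θ₂ ∈ B.M.trans →
          θ₁.src = p → θ₂.src = q → θ₁.lab = a → θ₂.lab = a →
          θ₁.guard = phiOf K t → θ₂.guard = phiOf K t →
          simEq B i θ₁.dst θ₂.dst

/-- The quotient automaton `B/∼^m`. -/
noncomputable def quotTA {A : Type} {K : ℕ} (B : KAcc A K) (m : ℕ) : TA A where
  Q := Quot (simEq B m)
  init := Quot.mk (simEq B m) B.M.init
  final := {c : Quot (simEq B m) | ∃ q ∈ B.M.final, c = Quot.mk (simEq B m) q}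
  trans := {θ : TTrans (Quot (simEq B m)) A |
    ∃ θ₀ ∈ B.M.trans,
      θ.src = Quot.mk (simEq B m) θ₀.src ∧ θ.dst = Quot.mk (simEq B m) θ₀.dst ∧
      θ.lab = θ₀.lab ∧ θ.guard = θ₀.guard ∧ θ.reset = θ₀.reset}

/-! ### Observation tables -/

/-- An observation table over `Σ_K`. -/
structure ObsTable (A : Type) (K : ℕ) where
  U1 : Set (TimedWord A)
  E : Set (TimedWord A)
  val : TimedWord A → TimedWord A → Bool
  U1fin : U1.Finite
  Efin : E.Finite
  U1sigma : ∀ u ∈ U1, SigmaWord K u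
  Esigma : ∀ e ∈ E, SigmaWord K e
  epsU1 : ([] : TimedWord A) ∈ U1
  prefixClosed : ∀ (u : TimedWord A) (x : ℝ≥0 × A), u ++ [x] ∈ U1 → u ∈ U1
  epsE : ([] : TimedWord A) ∈ E
  suffixClosed : ∀ (x : ℝ≥0 × A) (e : TimedWord A), x :: e ∈ E → e ∈ E

/-- The set `U2` of one-letter `Σ_K`-extensions of `U1`. -/
def obsU2 {A : Type} {K : ℕ} (T : ObsTable A K) : Set (TimedWord A) :=
  {w : TimedWord A | ∃ u ∈ T.U1, ∃ (t : ℝ≥0) (a : A), IsSigmaK K t ∧ w = u ++ [(t, a)]}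

/-- `R(u)`: the row of `u` (restricted to `E`) together with `c^K_⊤(u)`. -/
noncomputable def Rof {A : Type} {K : ℕ} (T : ObsTable A K) (u : TimedWord A) :
    ({e : TimedWord A // e ∈ T.E} → Bool) × WithTop ℝ≥0 :=
  (fun e => T.val u e.1, cKTop K u)

/-- The table is closed. -/
def ObsTable.Closed {A : Type} {K : ℕ} (T : ObsTable A K) : Prop :=
  ∀ w ∈ obsU2 T, ∃ u ∈ T.U1, Rof T w = Rof T u

/-- The table is consistent. -/
def ObsTable.Consistent {A : Type} {K : ℕ} (T : ObsTable A K) : Prop :=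
  ∀ u ∈ T.U1, ∀ w ∈ T.U1, Rof T u = Rof T w →
    ∀ (t : ℝ≥0) (a : A), IsSigmaK K t → Rof T (u ++ [(t, a)]) = Rof T (w ++ [(t, a)])

/-- The automaton `A_𝒯` induced by a (closed and consistent) observation table. -/
noncomputable def ATable {A : Type} {K : ℕ} (T : ObsTable A K) : TA A where
  Q := {f : ({e : TimedWord A // e ∈ T.E} → Bool) × WithTop ℝ≥0 // ∃ u ∈ T.U1, f = Rof T u}
  init := ⟨Rof T [], ⟨[], T.epsU1, rfl⟩⟩
  final := {q | ∃ u ∈ T.U1, q.1 = Rof T u ∧ T.val u [] = true}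
  trans := {θ | ∃ u ∈ T.U1, ∃ (t : ℝ≥0) (a : A), IsSigmaK K t ∧
      θ.src.1 = Rof T u ∧ θ.dst.1 = Rof T (u ++ [(t, a)]) ∧ θ.lab = a ∧
      θ.guard = phiOf K (cKW K u + t) ∧
      (θ.reset = true ↔ ∃ m : ℕ, m ≤ K ∧ cKW K u + t = (m : ℝ≥0))}

/-- A `K`-acceptor is consistent with the observation table `𝒯`. -/
def ConsistentWith {A : Type} {K : ℕ} (M : TA A) (T : ObsTable A K) : Prop :=
  ∀ w : TimedWord A, (w ∈ T.U1 ∨ w ∈ obsU2 T) → ∀ e ∈ T.E,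
    ∀ (q : M.Q) (ν : ℝ≥0), Steps M (M.init, 0) (w ++ e) (q, ν) →
      (q ∈ M.final ↔ T.val w e = true)

/-- Isomorphism of one-clock timed automata. -/
structure TAIso {A : Type} (M N : TA A) where
  toEquiv : M.Q ≃ N.Q
  init_eq : toEquiv M.init = N.init
  final_iff : ∀ q : M.Q, q ∈ M.final ↔ toEquiv q ∈ N.final
  trans_iff : ∀ θ : TTrans M.Q A,
    θ ∈ M.trans ↔
      (⟨toEquiv θ.src, toEquiv θ.dst, θ.lab, θ.guard, θ.reset⟩ : TTrans N.Q A) ∈ N.trans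


/-! ### Auxiliary lemmas for statement 9 -/

lemma floor_add_fracPart (x : ℝ≥0) : (⌊x⌋₊ : ℝ≥0) + fracPart x = x :=
  add_tsub_cancel_of_le (Nat.floor_le zero_le)

lemma fracPart_lt_one (x : ℝ≥0) : fracPart x < 1 := by
  rw [fracPart, tsub_lt_iff_left (Nat.floor_le zero_le)]
  exact Nat.lt_floor_add_one x

lemma fracPart_eq_zero_iff {x : ℝ≥0} : fracPart x = 0 ↔ IsNatVal x := by
  constructor
  · intro hx
    rw [fracPart, tsub_eq_zero_iff_le] at hx
    exact ⟨⌊x⌋₊, le_antisymm hx (Nat.floor_le zero_le)⟩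
  · rintro ⟨m, rfl⟩
    simp [fracPart, Nat.floor_natCast]

lemma fracPart_natCast (m : ℕ) : fracPart (m : ℝ≥0) = 0 := by
  simp [fracPart, Nat.floor_natCast]

lemma floor_natadd (n : ℕ) (s : ℝ≥0) (hs : s < 1) : ⌊(n : ℝ≥0) + s⌋₊ = n := by
  rw [Nat.floor_eq_iff zero_le]
  constructor
  · exact le_self_add
  · exact add_lt_add_right hs _

lemma fracPart_natadd (n : ℕ) (s : ℝ≥0) (hs : s < 1) : fracPart ((n : ℝ≥0) + s) = s := by
  rw [fracPart, floor_natadd n s hs, add_tsub_cancel_left]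

section fScaleLemmas

variable {lam lam' : ℝ≥0} (h0 : 0 < lam) (h1 : lam < 1) (h0' : 0 < lam') (h1' : lam' < 1)

include h0 h0' in
lemma fScale_lt_of_lt {t : ℝ≥0} (ht : t < lam) : fScale lam lam' t < lam' := by
  rw [fScale, if_pos ht.le]
  calc lam' / lam * t < lam' / lam * lam :=
        mul_lt_mul_of_pos_left ht (div_pos h0' h0)
    _ = lam' := div_mul_cancel₀ _ h0.ne'

lemma fScale_self (h0 : 0 < lam) : fScale lam lam' lam = lam' := by
  rw [fScale, if_pos le_rfl, div_mul_cancel₀ _ h0.ne']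

include h1 h1' in
lemma fScale_gt_of_gt {t : ℝ≥0} (ht : lam < t) : lam' < fScale lam lam' t := by
  rw [fScale, if_neg (not_le.2 ht)]
  exact lt_add_of_pos_right _
    (mul_pos (div_pos (tsub_pos_of_lt h1') (tsub_pos_of_lt h1)) (tsub_pos_of_lt ht))

include h0 h1 h1' in
lemma fScale_lt_one {t : ℝ≥0} (ht : t < 1) : fScale lam lam' t < 1 := by
  by_cases hc : t ≤ lam
  · rw [fScale, if_pos hc]
    calc lam' / lam * t ≤ lam' / lam * lam :=
          mul_le_mul_of_nonneg_left hc zero_le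
      _ = lam' := div_mul_cancel₀ _ h0.ne'
      _ < 1 := h1'
  · rw [fScale, if_neg hc]
    push_neg at hc
    calc lam' + (1 - lam') / (1 - lam) * (t - lam)
        < lam' + (1 - lam') / (1 - lam) * (1 - lam) := by
          refine add_lt_add_right (mul_lt_mul_of_pos_left ?_ ?_) _
          · exact tsub_lt_tsub_right_of_le hc.le ht
          · exact div_pos (tsub_pos_of_lt h1') (tsub_pos_of_lt h1)
      _ = lam' + (1 - lam') := by rw [div_mul_cancel₀ _ (tsub_pos_of_lt h1).ne']
      _ = 1 := add_tsub_cancel_of_le h1'.le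

include h0 h1 h0' h1' in
lemma fScale_leftInv (t : ℝ≥0) : fScale lam' lam (fScale lam lam' t) = t := by
  by_cases hc : t ≤ lam
  · have hinner : fScale lam lam' t = lam' / lam * t := by rw [fScale, if_pos hc]
    have hle : lam' / lam * t ≤ lam' := by
      calc lam' / lam * t ≤ lam' / lam * lam :=
            mul_le_mul_of_nonneg_left hc zero_le
        _ = lam' := div_mul_cancel₀ _ h0.ne'
    rw [hinner, fScale, if_pos hle, ← mul_assoc, div_mul_div_comm,
      mul_comm lam lam', div_self (mul_ne_zero h0'.ne' h0.ne'), one_mul]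
  · push_neg at hc
    have hinner : fScale lam lam' t = lam' + (1 - lam') / (1 - lam) * (t - lam) := by
      rw [fScale, if_neg (not_le.2 hc)]
    have hgt : lam' < lam' + (1 - lam') / (1 - lam) * (t - lam) :=
      lt_add_of_pos_right _
        (mul_pos (div_pos (tsub_pos_of_lt h1') (tsub_pos_of_lt h1)) (tsub_pos_of_lt hc))
    rw [hinner, fScale, if_neg (not_le.2 hgt), add_tsub_cancel_left, ← mul_assoc,
      div_mul_div_comm, mul_comm (1 - lam) (1 - lam'),
      div_self (mul_ne_zero (tsub_pos_of_lt h1').ne' (tsub_pos_of_lt h1).ne'), one_mul,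
      add_tsub_cancel_of_le hc.le]

end fScaleLemmas

/-- The condition in `tauStep`. -/
def TauCond (K : ℕ) (y y' : ℝ≥0) : Prop :=
  (IsNatVal y ∧ IsNatVal y') ∨ ((K : ℝ≥0) < y ∧ (K : ℝ≥0) < y')

lemma tauCond_symm {K : ℕ} {y y' : ℝ≥0} (h : TauCond K y y') : TauCond K y' y :=
  h.imp And.symm And.symm

lemma tauStep_pos {K : ℕ} {y y' : ℝ≥0} (h : TauCond K y y') (t : ℝ≥0) :
    tauStep K y y' t = t := by
  rw [tauStep]; exact if_pos h

lemma tauStep_neg {K : ℕ} {y y' : ℝ≥0} (h : ¬ TauCond K y y') (t : ℝ≥0) :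
    tauStep K y y' t = (⌊t⌋₊ : ℝ≥0) + fScale (1 - fracPart y) (1 - fracPart y') (fracPart t) := by
  rw [tauStep]; exact if_neg h

lemma regEq_refl (K : ℕ) (x : ℝ≥0) : RegEq K x x := Or.inl ⟨rfl, Iff.rfl⟩

lemma regeq_nontriv {K : ℕ} {x x' : ℝ≥0} (h : RegEq K x x') (hc : ¬ TauCond K x x') :
    ⌊x⌋₊ = ⌊x'⌋₊ ∧ fracPart x ≠ 0 ∧ fracPart x' ≠ 0 := by
  rcases h with ⟨hfl, hiff⟩ | h2
  · refine ⟨hfl, ?_, ?_⟩ <;> intro h0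
    · exact hc (Or.inl ⟨fracPart_eq_zero_iff.1 h0, fracPart_eq_zero_iff.1 (hiff.1 h0)⟩)
    · exact hc (Or.inl ⟨fracPart_eq_zero_iff.1 (hiff.2 h0), fracPart_eq_zero_iff.1 h0⟩)
  · exact absurd (Or.inr h2) hc

lemma tauStep_leftInv {K : ℕ} {x x' : ℝ≥0} (h : RegEq K x x') (t : ℝ≥0) :
    tauStep K x' x (tauStep K x x' t) = t := by
  by_cases hc : TauCond K x x'
  · rw [tauStep_pos hc t, tauStep_pos (tauCond_symm hc) t]
  · have hc' : ¬ TauCond K x' x := fun hh => hc (tauCond_symm hh)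
    obtain ⟨hfl, hα, hα'⟩ := regeq_nontriv h hc
    have h0 : 0 < 1 - fracPart x := tsub_pos_of_lt (fracPart_lt_one x)
    have h1 : 1 - fracPart x < 1 := tsub_lt_self one_pos (zero_lt_iff.2 hα)
    have h0' : 0 < 1 - fracPart x' := tsub_pos_of_lt (fracPart_lt_one x')
    have h1' : 1 - fracPart x' < 1 := tsub_lt_self one_pos (zero_lt_iff.2 hα')
    have hβ' : fScale (1 - fracPart x) (1 - fracPart x') (fracPart t) < 1 :=
      fScale_lt_one h0 h1 h1' (fracPart_lt_one t)
    rw [tauStep_neg hc t, tauStep_neg hc' _,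
      fracPart_natadd _ _ hβ', floor_natadd _ _ hβ',
      fScale_leftInv h0 h1 h0' h1', floor_add_fracPart]

lemma regEq_step {K : ℕ} {x x' : ℝ≥0} (h : RegEq K x x') (t : ℝ≥0) :
    RegEq K (x + t) (x' + tauStep K x x' t) := by
  by_cases hc : TauCond K x x'
  · rw [tauStep_pos hc t]
    rcases h with ⟨hfl, hiff⟩ | ⟨hK, hK'⟩
    · rcases hc with ⟨⟨m, rfl⟩, ⟨m', rfl⟩⟩ | ⟨hK, hK'⟩
      · have : m = m' := by
          simpa [Nat.floor_natCast] using hfl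
        subst this
        exact regEq_refl _ _
      · exact Or.inr ⟨lt_of_lt_of_le hK le_self_add, lt_of_lt_of_le hK' le_self_add⟩
    · exact Or.inr ⟨lt_of_lt_of_le hK le_self_add, lt_of_lt_of_le hK' le_self_add⟩
  · obtain ⟨hfl, hα, hα'⟩ := regeq_nontriv h hc
    rw [tauStep_neg hc t]
    set α := fracPart x with hαdef
    set α' := fracPart x' with hα'def
    set β := fracPart t with hβdef
    set β' := fScale (1 - α) (1 - α') β with hβ'def
    have h0 : 0 < 1 - α := tsub_pos_of_lt (fracPart_lt_one x)
    have h1 : 1 - α < 1 := tsub_lt_self one_pos (zero_lt_iff.2 hα)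
    have h0' : 0 < 1 - α' := tsub_pos_of_lt (fracPart_lt_one x')
    have h1' : 1 - α' < 1 := tsub_lt_self one_pos (zero_lt_iff.2 hα')
    have hα1 : α ≤ 1 := le_of_lt (fracPart_lt_one x)
    have hα'1 : α' ≤ 1 := le_of_lt (fracPart_lt_one x')
    have hxd : x = (⌊x⌋₊ : ℝ≥0) + α := (floor_add_fracPart x).symm
    have hx'd : x' = (⌊x⌋₊ : ℝ≥0) + α' := by rw [hfl]; exact (floor_add_fracPart x').symm
    have htd : t = (⌊t⌋₊ : ℝ≥0) + β := (floor_add_fracPart t).symm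
    set m := ⌊x⌋₊
    set n := ⌊t⌋₊
    left
    rcases lt_trichotomy (α + β) 1 with hlt | heq | hgt
    · -- fracs stay below 1
      have hβlam : β < 1 - α := lt_tsub_of_add_lt_left hlt
      have hβ'lam : β' < 1 - α' := fScale_lt_of_lt h0 h0' hβlam
      have hlt' : α' + β' < 1 := by
        calc α' + β' < α' + (1 - α') := add_lt_add_right hβ'lam _
          _ = 1 := add_tsub_cancel_of_le hα'1
      have e1 : x + t = ((m + n : ℕ) : ℝ≥0) + (α + β) := by
        rw [hxd, htd]; push_cast; ring
      have e2 : x' + ((n : ℝ≥0) + β') = ((m + n : ℕ) : ℝ≥0) + (α' + β') := by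
        rw [hx'd]; push_cast; ring
      rw [e1, e2]
      refine ⟨?_, ?_⟩
      · rw [floor_natadd _ _ hlt, floor_natadd _ _ hlt']
      · rw [fracPart_natadd _ _ hlt, fracPart_natadd _ _ hlt']
        constructor <;> intro hz <;> exfalso
        · exact hα (by simpa using (add_eq_zero.1 hz).1)
        · exact hα' (by simpa using (add_eq_zero.1 hz).1)
    · -- fracs sum to exactly 1
      have hβeq : β = 1 - α := eq_tsub_of_add_eq (by rw [add_comm]; exact heq)
      have hβ'eq : β' = 1 - α' := by rw [hβ'def, hβeq, fScale_self h0]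
      have heq' : α' + β' = 1 := by rw [hβ'eq, add_tsub_cancel_of_le hα'1]
      have e1 : x + t = ((m + n + 1 : ℕ) : ℝ≥0) := by
        rw [hxd, htd]; push_cast
        calc (m : ℝ≥0) + α + ((n : ℝ≥0) + β) = (m : ℝ≥0) + (n : ℝ≥0) + (α + β) := by ring
          _ = (m : ℝ≥0) + (n : ℝ≥0) + 1 := by rw [heq]
      have e2 : x' + ((n : ℝ≥0) + β') = ((m + n + 1 : ℕ) : ℝ≥0) := by
        rw [hx'd]; push_cast
        calc (m : ℝ≥0) + α' + ((n : ℝ≥0) + β') = (m : ℝ≥0) + (n : ℝ≥0) + (α' + β') := by ring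
          _ = (m : ℝ≥0) + (n : ℝ≥0) + 1 := by rw [heq']
      rw [e1, e2]
      exact ⟨rfl, Iff.rfl⟩
    · -- fracs sum exceeds 1
      have hβlam : 1 - α < β := by
        rw [tsub_lt_iff_left hα1]
        exact hgt
      have hβ'lam : 1 - α' < β' := fScale_gt_of_gt h1 h1' hβlam
      have hgt' : 1 < α' + β' := by
        calc 1 = α' + (1 - α') := (add_tsub_cancel_of_le hα'1).symm
          _ < α' + β' := add_lt_add_right hβ'lam _
      have hβ'1 : β' < 1 := fScale_lt_one h0 h1 h1' (fracPart_lt_one t)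
      have hs1 : α + β - 1 < 1 := by
        rw [tsub_lt_iff_left hgt.le]
        exact add_lt_add (fracPart_lt_one x) (fracPart_lt_one t)
      have hs1' : α' + β' - 1 < 1 := by
        rw [tsub_lt_iff_left hgt'.le]
        exact add_lt_add (fracPart_lt_one x') hβ'1
      have key : (1 : ℝ≥0) + (α + β - 1) = α + β := add_tsub_cancel_of_le hgt.le
      have key' : (1 : ℝ≥0) + (α' + β' - 1) = α' + β' := add_tsub_cancel_of_le hgt'.le
      have e1 : x + t = ((m + n + 1 : ℕ) : ℝ≥0) + (α + β - 1) := by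
        rw [hxd, htd]; push_cast
        calc (m : ℝ≥0) + α + ((n : ℝ≥0) + β)
            = (m : ℝ≥0) + (n : ℝ≥0) + (1 + (α + β - 1)) := by rw [key]; ring
          _ = (m : ℝ≥0) + (n : ℝ≥0) + 1 + (α + β - 1) := by ring
      have e2 : x' + ((n : ℝ≥0) + β') = ((m + n + 1 : ℕ) : ℝ≥0) + (α' + β' - 1) := by
        rw [hx'd]; push_cast
        calc (m : ℝ≥0) + α' + ((n : ℝ≥0) + β')
            = (m : ℝ≥0) + (n : ℝ≥0) + (1 + (α' + β' - 1)) := by rw [key']; ring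
          _ = (m : ℝ≥0) + (n : ℝ≥0) + 1 + (α' + β' - 1) := by ring
      rw [e1, e2]
      refine ⟨?_, ?_⟩
      · rw [floor_natadd _ _ hs1, floor_natadd _ _ hs1']
      · rw [fracPart_natadd _ _ hs1, fracPart_natadd _ _ hs1']
        have p1 : α + β - 1 ≠ 0 := (tsub_pos_of_lt hgt).ne'
        have p2 : α' + β' - 1 ≠ 0 := (tsub_pos_of_lt hgt').ne'
        exact ⟨fun hz => absurd hz p1, fun hz => absurd hz p2⟩

lemma resetStep_zero (K : ℕ) : resetStep K 0 = 0 := by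
  rw [resetStep]; split <;> rfl

lemma resetStep_idem (K : ℕ) (v : ℝ≥0) : resetStep K (resetStep K v) = resetStep K v := by
  by_cases hc : ∃ m : ℕ, m ≤ K ∧ v = (m : ℝ≥0)
  · have hv : resetStep K v = 0 := if_pos hc
    rw [hv, resetStep_zero]
  · have hv : resetStep K v = v := if_neg hc
    rw [hv, hv]

lemma regEq_resetStep {K : ℕ} {z z' : ℝ≥0} (h : RegEq K z z') :
    RegEq K (resetStep K z) (resetStep K z') := by
  by_cases hz : ∃ m : ℕ, m ≤ K ∧ z = (m : ℝ≥0)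
  · obtain ⟨m, hm, rfl⟩ := hz
    have hz' : z' = (m : ℝ≥0) := by
      rcases h with ⟨hfl, hiff⟩ | ⟨hK, _⟩
      · have hf : fracPart z' = 0 := hiff.1 (fracPart_natCast m)
        have := floor_add_fracPart z'
        rw [hf, add_zero] at this
        rw [← this, ← hfl, Nat.floor_natCast]
      · exact absurd hK (not_lt.2 (by exact_mod_cast hm))
    subst hz'
    rw [resetStep, if_pos ⟨m, hm, rfl⟩]
    exact regEq_refl _ _
  · by_cases hz' : ∃ m : ℕ, m ≤ K ∧ z' = (m : ℝ≥0)
    · obtain ⟨m, hm, rfl⟩ := hz'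
      exfalso
      rcases h with ⟨hfl, hiff⟩ | ⟨_, hK⟩
      · have hf : fracPart z = 0 := hiff.2 (fracPart_natCast m)
        have := floor_add_fracPart z
        rw [hf, add_zero] at this
        exact hz ⟨m, hm, by rw [← this, hfl, Nat.floor_natCast]⟩
      · exact absurd hK (not_lt.2 (by exact_mod_cast hm))
    · rw [resetStep, if_neg hz, resetStep, if_neg hz']
      exact h

lemma cKAux_append (K : ℕ) (d : Timestamp) (t : ℝ≥0) : ∀ v : ℝ≥0,
    cKAux K v (d ++ [t]) = resetStep K (cKAux K v d + t) := by
  induction d with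
  | nil => intro v; rfl
  | cons s d ih => intro v; rw [List.cons_append, cKAux, cKAux, ih]

lemma cKW_append_single {A : Type} (K : ℕ) (w : TimedWord A) (t : ℝ≥0) (a : A) :
    cKW K (w ++ [(t, a)]) = resetStep K (cKW K w + t) := by
  rw [cKW, cKW, List.map_append]
  exact cKAux_append K _ t 0

lemma cKAux_fixed (K : ℕ) (d : Timestamp) : ∀ v : ℝ≥0, resetStep K v = v →
    resetStep K (cKAux K v d) = cKAux K v d := by
  induction d with
  | nil => intro v hv; exact hv
  | cons s d ih => intro v hv; rw [cKAux]; exact ih _ (resetStep_idem K _)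

lemma cKW_fixed {A : Type} (K : ℕ) (w : TimedWord A) :
    resetStep K (cKW K w) = cKW K w :=
  cKAux_fixed K _ 0 (resetStep_zero K)

lemma tauW_cons {A : Type} (K : ℕ) {x x' : ℝ≥0} (hx : resetStep K x = x)
    (hx' : resetStep K x' = x') (t : ℝ≥0) (b : A) (w : TimedWord A) :
    tauW K x x' ((t, b) :: w) = (tauStep K x x' t, b) ::
      tauW K (resetStep K (x + t)) (resetStep K (x' + tauStep K x x' t)) w := by
  rw [tauW, hx, hx', tauWAux, tauW, resetStep_idem, resetStep_idem]

/-- one-step extension of `u` and its rescaled extension of `v`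
remain `≈^{L,K}`-equivalent. -/
theorem statement9 {A : Type} [Finite A] (L : Set (TimedWord A)) (K : ℕ)
    (u v : TimedWord A) (h : ApproxLK L K u v) (a : A) (tu tv' : ℝ≥0)
    (ht : tau K (cKW K u) (cKW K v) [tu] = [tv']) :
    RegEq K (cKW K (u ++ [(tu, a)])) (cKW K (v ++ [(tv', a)])) ∧
      (tauW K (cKW K (u ++ [(tu, a)])) (cKW K (v ++ [(tv', a)]))) ''
          (residual L (u ++ [(tu, a)])) = residual L (v ++ [(tv', a)]) := by
  obtain ⟨hreg, himg⟩ := h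
  have hxf : resetStep K (cKW K u) = cKW K u := cKW_fixed K u
  have hx'f : resetStep K (cKW K v) = cKW K v := cKW_fixed K v
  have htv : tauStep K (cKW K u) (cKW K v) tu = tv' := by
    have h1 : tau K (cKW K u) (cKW K v) [tu]
        = [tauStep K (cKW K u) (cKW K v) tu] := by
      simp [tau, tauAux, hxf, hx'f]
    rw [h1] at ht
    exact (List.cons_eq_cons.1 ht).1
  subst htv
  set x := cKW K u with hxdef
  set x' := cKW K v with hx'def
  set s := tauStep K x x' tu with hs
  have hcu : cKW K (u ++ [(tu, a)]) = resetStep K (x + tu) := cKW_append_single K u tu a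
  have hcv : cKW K (v ++ [(s, a)]) = resetStep K (x' + s) := cKW_append_single K v s a
  rw [hcu, hcv]
  set y := resetStep K (x + tu) with hy
  set y' := resetStep K (x' + s) with hy'
  have hreg2 : RegEq K y y' := regEq_resetStep (regEq_step hreg tu)
  refine ⟨hreg2, ?_⟩
  ext w
  simp only [Set.mem_image]
  constructor
  · rintro ⟨w0, hw0, rfl⟩
    have hz : ((tu, a) :: w0) ∈ residual L u := by
      have h' : (u ++ [(tu, a)]) ++ w0 ∈ L := hw0
      rwa [List.append_assoc, List.singleton_append] at h'
    have himgmem : tauW K x x' ((tu, a) :: w0) ∈ residual L v := by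
      rw [← himg]; exact Set.mem_image_of_mem _ hz
    rw [tauW_cons K hxf hx'f] at himgmem
    show (v ++ [(s, a)]) ++ tauW K y y' w0 ∈ L
    rw [List.append_assoc, List.singleton_append]
    exact himgmem
  · intro hw
    have hz : ((s, a) :: w) ∈ residual L v := by
      show v ++ ((s, a) :: w) ∈ L
      rw [← List.singleton_append, ← List.append_assoc]
      exact hw
    rw [← himg] at hz
    obtain ⟨z, hzres, hzeq⟩ := hz
    rcases z with _ | ⟨⟨t, b⟩, w0⟩
    · simp [tauW, tauWAux] at hzeq
    · rw [tauW_cons K hxf hx'f] at hzeq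
      obtain ⟨h1, h3⟩ := List.cons_eq_cons.1 hzeq
      have hts : tauStep K x x' t = s := congrArg Prod.fst h1
      have hb : b = a := congrArg Prod.snd h1
      have htt : t = tu := by
        have hinv := tauStep_leftInv hreg t
        rw [hts, hs, tauStep_leftInv hreg tu] at hinv
        exact hinv.symm
      refine ⟨w0, ?_, ?_⟩
      · show (u ++ [(tu, a)]) ++ w0 ∈ L
        rw [List.append_assoc, List.singleton_append, ← htt, ← hb]
        exact hzres
      · rw [htt] at h3
        exact h3

end IRTA
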